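/- Let M(μ) = log₂(μ - 1) - μ·log₂(1 - 1/μ) for μ > 1. Then μ·(M(μ) - log₂ μ - log₂ e) tends to -(log₂ e)/2 as μ → ∞; in particular M(μ) = log₂ μ + log₂ e - (log₂ e)/(2μ) + o(1/μ) as μ → ∞. -/

import Mathlib

open Filter Real Set

/-- Maximal Shannon entropy (in bits) among distributions with guessing entropy `μ`. -/
noncomputable def maxEntropy (μ : ℝ) : ℝ :=
  Real.logb 2 (μ - 1) - μ * Real.logb 2 (1 - 1/μ)


lemma keyDeriv {x : ℝ} (hx : x ∈ Ioo (0:ℝ) 1) :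
    HasDerivAt (fun t : ℝ => (t - 1) * Real.log (1 - t) - t) (Real.log (1 - x)) x := by
  have hne : (1 : ℝ) - x ≠ 0 := by nlinarith [hx.1, hx.2]
  have h1 : HasDerivAt (fun t : ℝ => 1 - t) (-1) x := (hasDerivAt_id x).const_sub 1
  have hlog : HasDerivAt (fun t : ℝ => Real.log (1 - t)) ((1 - x)⁻¹ * (-1)) x :=
    (Real.hasDerivAt_log hne).comp x h1
  have h2 : HasDerivAt (fun t : ℝ => (t - 1) * Real.log (1 - t) - t)
      (1 * Real.log (1 - x) + (x - 1) * ((1 - x)⁻¹ * (-1)) - 1) x :=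
    (((hasDerivAt_id x).sub_const 1).mul hlog).sub (hasDerivAt_id x)
  convert h2 using 1
  field_simp
  ring

lemma keySlope : Tendsto (fun t : ℝ => Real.log (1 - t) / (2 * t))
    (nhdsWithin 0 (Ioi 0)) (nhds (-(1/2))) := by
  have hd : HasDerivAt (fun t : ℝ => Real.log (1 - t)) (-1) 0 := by
    have h1 : HasDerivAt (fun t : ℝ => 1 - t) (-1) (0:ℝ) := (hasDerivAt_id 0).const_sub 1
    have := (Real.hasDerivAt_log (by norm_num : (1:ℝ) - 0 ≠ 0)).comp 0 h1
    simp only [sub_zero, inv_one, one_mul] at this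
    exact this
  have hslope := hasDerivAt_iff_tendsto_slope.1 hd
  have hsub : Ioi (0:ℝ) ⊆ {(0:ℝ)}ᶜ := fun x hx => ne_of_gt hx
  have h1 : Tendsto (fun t : ℝ => Real.log (1 - t) / t) (nhdsWithin 0 (Ioi 0)) (nhds (-1)) := by
    have h := hslope.mono_left (nhdsWithin_mono _ hsub)
    refine h.congr fun x => ?_
    simp [slope_fun_def]
    rw [inv_mul_eq_div]
  have h2 := h1.div_const 2
  have : (-1 : ℝ) / 2 = -(1/2) := by norm_num
  rw [this] at h2
  refine h2.congr fun x => ?_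
  rw [div_div, mul_comm]

lemma keyA : Tendsto (fun t : ℝ => ((t - 1) * Real.log (1 - t) - t) / t ^ 2)
    (nhdsWithin 0 (Ioi 0)) (nhds (-(1/2))) := by
  have hmem : Ioo (0:ℝ) 1 ∈ nhdsWithin (0:ℝ) (Ioi 0) :=
    Ioo_mem_nhdsGT_of_mem ⟨le_refl _, one_pos⟩
  apply HasDerivAt.lhopital_zero_nhdsGT (f' := fun t => Real.log (1 - t))
    (g' := fun t => 2 * t)
  · filter_upwards [hmem] with x hx using keyDeriv hx
  · filter_upwards [hmem] with x hx
    have := hasDerivAt_pow 2 x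
    simpa using this
  · filter_upwards [hmem] with x hx
    have := hx.1; positivity
  · have hc : ContinuousAt (fun t : ℝ => (t - 1) * Real.log (1 - t) - t) 0 := by
      have h : ContinuousAt (fun t : ℝ => Real.log (1 - t)) 0 :=
        (Real.continuousAt_log (by norm_num)).comp (by fun_prop)
      fun_prop
    have h := hc.tendsto.mono_left (nhdsWithin_le_nhds (s := Ioi (0:ℝ)))
    simpa using h
  · have h : ContinuousAt (fun t : ℝ => t ^ 2) (0:ℝ) := by fun_prop
    simpa using h.tendsto.mono_left (nhdsWithin_le_nhds (s := Ioi (0:ℝ)))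
  · exact keySlope


lemma hlog2 : Real.log 2 ≠ 0 := ne_of_gt (Real.log_pos one_lt_two)

lemma hlogbexp : Real.logb 2 (Real.exp 1) = (Real.log 2)⁻¹ := by
  rw [Real.logb, Real.log_exp, one_div]

lemma part1 : Tendsto
      (fun μ : ℝ => μ * (maxEntropy μ - Real.logb 2 μ - Real.logb 2 (Real.exp 1)))
      Filter.atTop (nhds (-(Real.logb 2 (Real.exp 1)) / 2)) := by
  have htends : Tendsto (fun μ : ℝ => 1/μ) atTop (nhdsWithin 0 (Ioi 0)) := by
    rw [tendsto_nhdsWithin_iff]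
    constructor
    · simpa [one_div] using tendsto_inv_atTop_zero
    · filter_upwards [eventually_gt_atTop (0:ℝ)] with μ hμ
      exact one_div_pos.2 hμ
  have hcomp := (keyA.comp htends).mul_const ((Real.log 2)⁻¹)
  have hval : -(1/2) * (Real.log 2)⁻¹ = -(Real.logb 2 (Real.exp 1)) / 2 := by
    rw [hlogbexp]; ring
  rw [hval] at hcomp
  refine hcomp.congr' ?_
  filter_upwards [eventually_ge_atTop (2:ℝ)] with μ hμ
  have hμ0 : μ ≠ 0 := by linarith
  have hμ1 : (0:ℝ) < μ - 1 := by linarith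
  have hin : (0:ℝ) < 1 - 1/μ := by
    rw [sub_pos, div_lt_one (by linarith : (0:ℝ) < μ)]; linarith
  have hlogsplit : Real.log (μ - 1) = Real.log (1 - 1/μ) + Real.log μ := by
    rw [← Real.log_mul (ne_of_gt hin) hμ0]
    congr 1
    field_simp
  show (((1/μ - 1) * Real.log (1 - 1/μ) - 1/μ) / (1/μ) ^ 2) * (Real.log 2)⁻¹
      = μ * (maxEntropy μ - Real.logb 2 μ - Real.logb 2 (Real.exp 1))
  rw [maxEntropy, Real.logb, Real.logb, Real.logb, Real.logb, hlogsplit, Real.log_exp]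
  field_simp
  ring

theorem maxEntropy_asymptotic :
    Filter.Tendsto
      (fun μ : ℝ => μ * (maxEntropy μ - Real.logb 2 μ - Real.logb 2 (Real.exp 1)))
      Filter.atTop (nhds (-(Real.logb 2 (Real.exp 1)) / 2)) ∧
    (fun μ : ℝ =>
        maxEntropy μ - (Real.logb 2 μ + Real.logb 2 (Real.exp 1) - Real.logb 2 (Real.exp 1) / (2 * μ)))
      =o[Filter.atTop] fun μ : ℝ => 1 / μ := by
  refine ⟨part1, ?_⟩
  set c := Real.logb 2 (Real.exp 1) with hc
  have h0 : Tendsto (fun μ : ℝ =>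
      μ * (maxEntropy μ - Real.logb 2 μ - c) + c / 2) atTop (nhds 0) := by
    have h := part1.add_const (c / 2)
    rw [← hc] at h
    convert h using 2
    ring
  have hlo : (fun μ : ℝ => μ * (maxEntropy μ - Real.logb 2 μ - c) + c / 2)
      =o[atTop] (fun _ : ℝ => (1:ℝ)) := (Asymptotics.isLittleO_one_iff ℝ).2 h0
  have hlo2 := hlo.mul_isBigO (Asymptotics.isBigO_refl (fun μ : ℝ => 1/μ) atTop)
  refine hlo2.congr' ?_ ?_
  · filter_upwards [eventually_ge_atTop (1:ℝ)] with μ hμ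
    have hμ0 : μ ≠ 0 := by linarith
    field_simp
    ring
  · filter_upwards with μ
    simp
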